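/- Let G be a d-regular finite simple undirected graph on n vertices (d ≥ 1), let S and S′ be two sets of vertices with |S| = |S′| = k, and let η and η′ solve the McAvoy–Allen system for S and S′ respectively. If a(S) ≤ a(S′), then (1/(2d²n²)) · Σ_{u,v ∈ V} |N(u) ∩ N(v)| · η(u,v) ≥ (1/(2d²n²)) · Σ_{u,v ∈ V} |N(u) ∩ N(v)| · η′(u,v); that is, the constant c(G,S) of the weak-selection expansion is at least c(G,S′). -/

import Mathlib

open Finset

variable {V : Type*}

/-- Number of active edges: edges with exactly one endpoint in `S`. -/
def activeCount [Fintype V] [DecidableEq V] (G : SimpleGraph V) [DecidableRel G.Adj]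
    (S : Finset V) : ℕ :=
  (G.edgeFinset.filter (fun e =>
    Sym2.lift ⟨fun u v => xor (decide (u ∈ S)) (decide (v ∈ S)),
      fun u v => Bool.xor_comm _ _⟩ e = true)).card

/-- `η` solves the McAvoy–Allen system for `S` on a `d`-regular graph `G`. -/
def MASolves [Fintype V] [DecidableEq V] (G : SimpleGraph V) [DecidableRel G.Adj]
    (d : ℕ) (S : Finset V) (η : V → V → ℝ) : Prop :=
  (∀ u, η u u = 0) ∧
  ∀ u v, u ≠ v →
    η u v = ((Fintype.card V : ℝ) / 2) *
        |(if u ∈ S then (1 : ℝ) else 0) - (if v ∈ S then (1 : ℝ) else 0)|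
      + (1 / (2 * (d : ℝ))) *
        ((∑ w ∈ G.neighborFinset u, η w v) + (∑ w ∈ G.neighborFinset v, η u w))

private lemma sum_nbr_comm [Fintype V] [DecidableEq V] (G : SimpleGraph V) [DecidableRel G.Adj]
    (f : V → V → ℝ) :
    ∑ u : V, ∑ w ∈ G.neighborFinset u, f u w = ∑ w : V, ∑ u ∈ G.neighborFinset w, f u w := by
  simp only [SimpleGraph.neighborFinset_eq_filter, Finset.sum_filter]
  rw [Finset.sum_comm]
  refine Finset.sum_congr rfl fun w _ => Finset.sum_congr rfl fun u _ => ?_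
  exact if_congr (G.adj_comm u w) rfl rfl

private lemma triple_swap [Fintype V] (f : V → V → V → ℝ) :
    ∑ u : V, ∑ v : V, ∑ w : V, f u v w = ∑ w : V, ∑ v : V, ∑ u : V, f u v w := by
  calc ∑ u : V, ∑ v : V, ∑ w : V, f u v w
      = ∑ u : V, ∑ w : V, ∑ v : V, f u v w :=
        Finset.sum_congr rfl fun u _ => Finset.sum_comm
    _ = ∑ w : V, ∑ u : V, ∑ v : V, f u v w := Finset.sum_comm
    _ = ∑ w : V, ∑ v : V, ∑ u : V, f u v w :=
        Finset.sum_congr rfl fun w _ => Finset.sum_comm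

/-- The subgraph consisting of active edges. -/
private def activeGraph [DecidableEq V] (G : SimpleGraph V) (S : Finset V) : SimpleGraph V where
  Adj u v := G.Adj u v ∧ ¬(u ∈ S ↔ v ∈ S)
  symm := by
    refine ⟨fun u v ⟨h1, h2⟩ => ?_⟩
    exact ⟨h1.symm, fun h => h2 h.symm⟩
  loopless := ⟨fun v h => G.irrefl h.1⟩

private instance activeGraphDec [DecidableEq V] (G : SimpleGraph V) [DecidableRel G.Adj]
    (S : Finset V) : DecidableRel (activeGraph G S).Adj :=
  fun _ _ => instDecidableAnd

private lemma activeGraph_edgeFinset [Fintype V] [DecidableEq V] (G : SimpleGraph V)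
    [DecidableRel G.Adj] (S : Finset V) :
    (activeGraph G S).edgeFinset =
      G.edgeFinset.filter (fun e =>
        Sym2.lift ⟨fun u v => xor (decide (u ∈ S)) (decide (v ∈ S)),
          fun u v => Bool.xor_comm _ _⟩ e = true) := by
  ext e
  refine Sym2.ind (fun u v => ?_) e
  by_cases h1 : u ∈ S <;> by_cases h2 : v ∈ S <;>
    (simp only [Finset.mem_filter, SimpleGraph.mem_edgeFinset]
     simp [SimpleGraph.mem_edgeFinset, SimpleGraph.mem_edgeSet, activeGraph, h1, h2])

private lemma two_mul_activeCount [Fintype V] [DecidableEq V] (G : SimpleGraph V)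
    [DecidableRel G.Adj] (S : Finset V) :
    ∑ u : V, ∑ v ∈ G.neighborFinset u,
        |(if u ∈ S then (1 : ℝ) else 0) - (if v ∈ S then (1 : ℝ) else 0)|
      = 2 * (activeCount G S : ℝ) := by
  have h1 : ∀ u : V, ∑ v ∈ G.neighborFinset u,
      |(if u ∈ S then (1 : ℝ) else 0) - (if v ∈ S then (1 : ℝ) else 0)|
      = ((activeGraph G S).degree u : ℝ) := by
    intro u
    have hnb : (activeGraph G S).neighborFinset u
        = (G.neighborFinset u).filter (fun v => ¬(u ∈ S ↔ v ∈ S)) := by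
      ext v
      rw [SimpleGraph.mem_neighborFinset]
      simp [SimpleGraph.mem_neighborFinset, activeGraph]
    rw [SimpleGraph.degree, hnb, Finset.card_filter]
    push_cast
    refine Finset.sum_congr rfl fun v _ => ?_
    by_cases h1 : u ∈ S <;> by_cases h2 : v ∈ S <;> simp [h1, h2]
  simp only [h1]
  rw [← Nat.cast_sum, SimpleGraph.sum_degrees_eq_twice_card_edges,
    activeGraph_edgeFinset]
  push_cast [activeCount]
  ring

private lemma chi_sum [Fintype V] [DecidableEq V] (S : Finset V) :
    ∑ u : V, (if u ∈ S then (1 : ℝ) else 0) = (S.card : ℝ) := by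
  simp [Finset.sum_ite_mem, Finset.univ_inter]

set_option maxHeartbeats 1000000 in
/-- The master formula: the weighted sum is determined by `|S|` and the number of
active edges. -/
private lemma key_formula [Fintype V] [DecidableEq V] (G : SimpleGraph V) [DecidableRel G.Adj]
    (d : ℕ) (hd : 1 ≤ d) (hreg : G.IsRegularOfDegree d) (S : Finset V)
    (η : V → V → ℝ) (hη : MASolves G d S η) :
    ∑ u : V, ∑ v : V, ((G.neighborFinset u ∩ G.neighborFinset v).card : ℝ) * η u v
      = (d : ℝ) * ((d : ℝ) * ((Fintype.card V : ℝ) * (S.card : ℝ) *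
          ((Fintype.card V : ℝ) - (S.card : ℝ)))
        - (Fintype.card V : ℝ) * (activeCount G S : ℝ)) := by
  obtain ⟨hdiag, hrec⟩ := hη
  have hdR : (d : ℝ) ≠ 0 := by positivity
  set n : ℝ := (Fintype.card V : ℝ) with hn
  set kk : ℝ := (S.card : ℝ) with hkk
  set a : ℝ := (activeCount G S : ℝ) with haa
  set χ : V → ℝ := fun u => if u ∈ S then (1 : ℝ) else 0 with hχ
  have hχs : ∑ x : V, χ x = kk := chi_sum S
  -- Step C : total sum of |χ u - χ v|
  have habs : ∀ u v : V, |χ u - χ v| = χ u + χ v - 2 * (χ u * χ v) := by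
    intro u v
    by_cases h1 : u ∈ S <;> by_cases h2 : v ∈ S <;> simp [hχ, h1, h2] <;> norm_num
  have hBsum : ∑ u : V, ∑ v : V, |χ u - χ v| = 2 * kk * n - 2 * kk ^ 2 := by
    simp only [habs]
    simp only [Finset.sum_sub_distrib, Finset.sum_add_distrib, Finset.sum_const,
      Finset.card_univ, nsmul_eq_mul, ← Finset.mul_sum, ← Finset.sum_mul, hχs]
    rw [← hn]
    ring
  -- common abbreviations
  set T : ℝ := ∑ u : V, ∑ v : V, ((G.neighborFinset u ∩ G.neighborFinset v).card : ℝ) * η u v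
    with hT
  set E : ℝ := ∑ u : V, ∑ v ∈ G.neighborFinset u, η u v with hE
  set S1 : ℝ := ∑ u : V, ∑ v : V, η u v with hS1
  -- Step A : derive E = d * (n * kk * (n - kk))
  have hsplit : ∀ u v : V, η u v = (n / 2) * |χ u - χ v|
      + (1 / (2 * (d : ℝ))) *
          ((∑ w ∈ G.neighborFinset u, η w v) + (∑ w ∈ G.neighborFinset v, η u w))
      - (if u = v then (1 / (2 * (d : ℝ))) *
          ((∑ w ∈ G.neighborFinset u, η w u) + (∑ w ∈ G.neighborFinset u, η u w)) else 0) := by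
    intro u v
    by_cases h : u = v
    · subst h
      simp [hdiag u]
    · rw [hrec u v h]
      simp [h, hχ, hn]
  have hPsum : ∑ u : V, ∑ v : V, (∑ w ∈ G.neighborFinset u, η w v) = (d : ℝ) * S1 := by
    have h0 : ∑ u : V, ∑ v : V, (∑ w ∈ G.neighborFinset u, η w v)
        = ∑ u : V, ∑ w ∈ G.neighborFinset u, (∑ v : V, η w v) :=
      Finset.sum_congr rfl fun u _ => Finset.sum_comm
    rw [h0, sum_nbr_comm G (fun _ w => ∑ v : V, η w v)]
    simp only [Finset.sum_const, nsmul_eq_mul]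
    rw [hS1, Finset.mul_sum]
    exact Finset.sum_congr rfl fun w _ => by rw [show #(G.neighborFinset w) = d from hreg w]
  have hQsum : ∑ u : V, ∑ v : V, (∑ w ∈ G.neighborFinset v, η u w) = (d : ℝ) * S1 := by
    rw [Finset.sum_comm]
    have h0 : ∑ v : V, ∑ u : V, (∑ w ∈ G.neighborFinset v, η u w)
        = ∑ v : V, ∑ w ∈ G.neighborFinset v, (∑ u : V, η u w) :=
      Finset.sum_congr rfl fun v _ => Finset.sum_comm
    rw [h0, sum_nbr_comm G (fun _ w => ∑ u : V, η u w)]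
    simp only [Finset.sum_const, nsmul_eq_mul]
    have h1 : S1 = ∑ w : V, ∑ u : V, η u w := Finset.sum_comm
    rw [h1, Finset.mul_sum]
    exact Finset.sum_congr rfl fun w _ => by rw [show #(G.neighborFinset w) = d from hreg w]
  have hrev : ∑ u : V, ∑ w ∈ G.neighborFinset u, η w u = E := by
    rw [hE]; exact sum_nbr_comm G (fun u w => η w u)
  have eA : ∑ u : V, ∑ v : V, (n / 2) * |χ u - χ v| = (n / 2) * (2 * kk * n - 2 * kk ^ 2) := by
    simp only [← Finset.mul_sum]
    rw [hBsum]
  have eB : ∑ u : V, ∑ v : V, ((1 / (2 * (d : ℝ))) *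
        ((∑ w ∈ G.neighborFinset u, η w v) + (∑ w ∈ G.neighborFinset v, η u w)))
      = (1 / (2 * (d : ℝ))) * ((d : ℝ) * S1 + (d : ℝ) * S1) := by
    simp only [← Finset.mul_sum]
    simp only [Finset.sum_add_distrib]
    rw [hPsum, hQsum]
  have eC : ∑ u : V, ∑ v : V, (if u = v then (1 / (2 * (d : ℝ))) *
        ((∑ w ∈ G.neighborFinset u, η w u) + (∑ w ∈ G.neighborFinset u, η u w)) else 0)
      = (1 / (2 * (d : ℝ))) * (E + E) := by
    simp only [Finset.sum_ite_eq, Finset.mem_univ, if_true]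
    rw [← Finset.mul_sum, Finset.sum_add_distrib, hrev, ← hE]
  have hS1eq : S1 = (n / 2) * (2 * kk * n - 2 * kk ^ 2)
      + (1 / (2 * (d : ℝ))) * ((d : ℝ) * S1 + (d : ℝ) * S1)
      - (1 / (2 * (d : ℝ))) * (E + E) := by
    have expand : S1 = ∑ u : V, ∑ v : V, ((n / 2) * |χ u - χ v|
        + (1 / (2 * (d : ℝ))) *
            ((∑ w ∈ G.neighborFinset u, η w v) + (∑ w ∈ G.neighborFinset v, η u w))
        - (if u = v then (1 / (2 * (d : ℝ))) *
            ((∑ w ∈ G.neighborFinset u, η w u) + (∑ w ∈ G.neighborFinset u, η u w)) else 0)) := by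
      rw [hS1]
      exact Finset.sum_congr rfl fun u _ => Finset.sum_congr rfl fun v _ => hsplit u v
    conv_lhs => rw [expand]
    simp only [Finset.sum_sub_distrib, Finset.sum_add_distrib]
    rw [eA, eB, eC]
  have hEval : E = (d : ℝ) * (n * kk * (n - kk)) := by
    have hcancel : (1 / (2 * (d : ℝ))) * ((d : ℝ) * S1 + (d : ℝ) * S1) = S1 := by
      field_simp
      ring
    rw [hcancel] at hS1eq
    have h2 : (1 / (2 * (d : ℝ))) * (E + E) = (n / 2) * (2 * kk * n - 2 * kk ^ 2) := by
      linarith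
    have h3 : E / (d : ℝ) = (n / 2) * (2 * kk * n - 2 * kk ^ 2) := by
      rw [← h2]; field_simp; ring
    field_simp at h3
    nlinarith [h3]
  -- Step B : contract with the adjacency relation
  have hA : ∀ (u : V) (f : V → ℝ),
      ∑ v ∈ G.neighborFinset u, f v = ∑ v : V, (if G.Adj u v then (1:ℝ) else 0) * f v := by
    intro u f
    rw [SimpleGraph.neighborFinset_eq_filter, Finset.sum_filter]
    exact Finset.sum_congr rfl fun v _ => by by_cases h : G.Adj u v <;> simp [h]
  have hAsymm : ∀ u v : V, (if G.Adj u v then (1:ℝ) else 0) = (if G.Adj v u then (1:ℝ) else 0) := by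
    intro u v
    by_cases h : G.Adj u v
    · simp [h, h.symm]
    · have h' : ¬ G.Adj v u := fun hc => h hc.symm
      simp [h, h']
  have hcard : ∀ u v : V, ((G.neighborFinset u ∩ G.neighborFinset v).card : ℝ)
      = ∑ w : V, (if G.Adj u w then (1:ℝ) else 0) * (if G.Adj v w then (1:ℝ) else 0) := by
    intro u v
    have h0 : (G.neighborFinset u ∩ G.neighborFinset v).card
        = (Finset.univ.filter
            (fun w => w ∈ G.neighborFinset u ∩ G.neighborFinset v)).card := by
      congr 1
      ext w
      simp
    rw [h0, ← Finset.sum_boole]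
    push_cast
    refine Finset.sum_congr rfl fun w _ => ?_
    by_cases h1 : G.Adj u w <;> by_cases h2 : G.Adj v w <;>
      simp [h1, h2, SimpleGraph.mem_neighborFinset]
  have hTform : T = ∑ u : V, ∑ v : V, ∑ w : V,
      (if G.Adj u w then (1:ℝ) else 0) * (if G.Adj v w then (1:ℝ) else 0) * η u v := by
    rw [hT]
    refine Finset.sum_congr rfl fun u _ => Finset.sum_congr rfl fun v _ => ?_
    rw [hcard, Finset.sum_mul]
  have hT1 : ∑ u : V, ∑ v ∈ G.neighborFinset u, (∑ w ∈ G.neighborFinset u, η w v) = T := by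
    have l1 : ∑ u : V, ∑ v ∈ G.neighborFinset u, (∑ w ∈ G.neighborFinset u, η w v)
        = ∑ u : V, ∑ v : V, ∑ w : V, (if G.Adj u v then (1:ℝ) else 0) *
            ((if G.Adj u w then (1:ℝ) else 0) * η w v) := by
      refine Finset.sum_congr rfl fun u _ => ?_
      rw [hA u (fun v => ∑ w ∈ G.neighborFinset u, η w v)]
      refine Finset.sum_congr rfl fun v _ => ?_
      rw [hA u (fun w => η w v), Finset.mul_sum]
    rw [l1, hTform, triple_swap]
    refine Finset.sum_congr rfl fun w _ => Finset.sum_congr rfl fun v _ =>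
      Finset.sum_congr rfl fun u _ => ?_
    rw [hAsymm w u, hAsymm v u]
    ring
  have hT2 : ∑ u : V, ∑ v ∈ G.neighborFinset u, (∑ w ∈ G.neighborFinset v, η u w) = T := by
    have l1 : ∑ u : V, ∑ v ∈ G.neighborFinset u, (∑ w ∈ G.neighborFinset v, η u w)
        = ∑ u : V, ∑ v : V, ∑ w : V, (if G.Adj u v then (1:ℝ) else 0) *
            ((if G.Adj v w then (1:ℝ) else 0) * η u w) := by
      refine Finset.sum_congr rfl fun u _ => ?_
      rw [hA u (fun v => ∑ w ∈ G.neighborFinset v, η u w)]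
      refine Finset.sum_congr rfl fun v _ => ?_
      rw [hA v (fun w => η u w), Finset.mul_sum]
    have l2 : ∑ u : V, ∑ v : V, ∑ w : V, (if G.Adj u v then (1:ℝ) else 0) *
            ((if G.Adj v w then (1:ℝ) else 0) * η u w)
        = ∑ u : V, ∑ w : V, ∑ v : V, (if G.Adj u v then (1:ℝ) else 0) *
            ((if G.Adj v w then (1:ℝ) else 0) * η u w) :=
      Finset.sum_congr rfl fun u _ => Finset.sum_comm
    rw [l1, l2, hTform]
    refine Finset.sum_congr rfl fun u _ => Finset.sum_congr rfl fun w _ =>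
      Finset.sum_congr rfl fun v _ => ?_
    rw [hAsymm w v]
    ring
  have fB : ∑ u : V, ∑ v ∈ G.neighborFinset u, (n / 2) * |χ u - χ v| = (n / 2) * (2 * a) := by
    simp only [← Finset.mul_sum]
    rw [show (∑ u : V, ∑ v ∈ G.neighborFinset u, |χ u - χ v|)
        = 2 * a from by rw [haa]; exact two_mul_activeCount G S]
  have fC : ∑ u : V, ∑ v ∈ G.neighborFinset u, ((1 / (2 * (d : ℝ))) *
        ((∑ w ∈ G.neighborFinset u, η w v) + (∑ w ∈ G.neighborFinset v, η u w)))
      = (1 / (2 * (d : ℝ))) * (T + T) := by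
    simp only [← Finset.mul_sum]
    simp only [Finset.sum_add_distrib]
    rw [hT1, hT2]
  have hEeqB : E = (n / 2) * (2 * a) + (1 / (2 * (d : ℝ))) * (T + T) := by
    have expand : E = ∑ u : V, ∑ v ∈ G.neighborFinset u, ((n / 2) * |χ u - χ v|
        + (1 / (2 * (d : ℝ))) *
            ((∑ w ∈ G.neighborFinset u, η w v) + (∑ w ∈ G.neighborFinset v, η u w))) := by
      rw [hE]
      refine Finset.sum_congr rfl fun u _ => Finset.sum_congr rfl fun v hv => ?_
      have hadj : G.Adj u v := (SimpleGraph.mem_neighborFinset G u v).mp hv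
      rw [hrec u v (G.ne_of_adj hadj)]
    rw [expand]
    simp only [Finset.sum_add_distrib]
    rw [fB, fC]
  -- Conclude
  have : (1 / (2 * (d : ℝ))) * (T + T) = T / d := by field_simp; ring
  rw [this] at hEeqB
  rw [hEval] at hEeqB
  field_simp at hEeqB
  nlinarith [hEeqB]

theorem constant_antitone_in_active_edges [Fintype V] [DecidableEq V]
    (G : SimpleGraph V) [DecidableRel G.Adj]
    (d k : ℕ) (hd : 1 ≤ d) (hreg : G.IsRegularOfDegree d)
    (S S' : Finset V) (hk : S.card = k) (hk' : S'.card = k)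
    (η η' : V → V → ℝ) (hη : MASolves G d S η) (hη' : MASolves G d S' η')
    (ha : activeCount G S ≤ activeCount G S') :
    (1 / (2 * (d : ℝ) ^ 2 * (Fintype.card V : ℝ) ^ 2)) *
      ∑ u : V, ∑ v : V, ((G.neighborFinset u ∩ G.neighborFinset v).card : ℝ) * η u v
    ≥ (1 / (2 * (d : ℝ) ^ 2 * (Fintype.card V : ℝ) ^ 2)) *
      ∑ u : V, ∑ v : V, ((G.neighborFinset u ∩ G.neighborFinset v).card : ℝ) * η' u v := by
  rw [key_formula G d hd hreg S η hη, key_formula G d hd hreg S' η' hη', hk, hk']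
  have haR : (activeCount G S : ℝ) ≤ (activeCount G S' : ℝ) := Nat.cast_le.mpr ha
  have hc : (0:ℝ) ≤ 1 / (2 * (d : ℝ) ^ 2 * (Fintype.card V : ℝ) ^ 2) := by positivity
  have hn0 : (0:ℝ) ≤ (Fintype.card V : ℝ) := Nat.cast_nonneg _
  have hd0 : (0:ℝ) ≤ (d : ℝ) := Nat.cast_nonneg _
  apply mul_le_mul_of_nonneg_left _ hc
  nlinarith [mul_le_mul_of_nonneg_left haR (mul_nonneg hd0 hn0)]
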